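/- Fix an integer c ≥ 2 and p ∈ (0,1). Let X₁, …, X_c be i.i.d. Bernoulli(p) random variables, let J be uniformly distributed on {1, …, c} and independent of (X₁, …, X_c), and set Y = X_J (the interleaving attack). Let g be the score function g(0,0,p) = ln(1 + p/(c(1−p))), g(0,1,p) = g(1,0,p) = ln(1 − 1/c), g(1,1,p) = ln(1 + (1−p)/(cp)). Then the per-segment expected score of the colluder X₁, namely E[g(X₁, Y, p)] = ∑_{x,y ∈ {0,1}} P(X₁ = x, Y = y) · g(x,y,p), is strictly positive, and the per-segment expected score of an innocent user, namely ∑_{x,y ∈ {0,1}} P(X₁ = x)·P(Y = y)·g(x,y,p), is strictly negative. -/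

import Mathlib

open MeasureTheory ProbabilityTheory ENNReal

/-- The interleaving log-likelihood score function `g(x,y,p)` of the paper
(with the bit `1` encoded as `true` and `0` as `false`):
`g(0,0,p) = ln(1 + p/(c(1−p)))`, `g(0,1,p) = g(1,0,p) = ln(1 − 1/c)`,
`g(1,1,p) = ln(1 + (1−p)/(cp))`. -/
lemma term_ge {q r : ℝ} (hq : 0 < q) (hr : 0 < r) : q - r ≤ q * Real.log (q / r) := by
  have h := Real.log_le_sub_one_of_pos (div_pos hr hq)
  have hlog : Real.log (q / r) = - Real.log (r / q) := by
    rw [← Real.log_inv, inv_div]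
  rw [hlog]
  have h2 := mul_le_mul_of_nonneg_left h hq.le
  have h3 : q * (r / q) = r := by field_simp
  nlinarith

lemma term_gt {q r : ℝ} (hq : 0 < q) (hr : 0 < r) (hne : q ≠ r) :
    q - r < q * Real.log (q / r) := by
  have hne' : r / q ≠ 1 := by
    intro h; apply hne; field_simp at h; linarith
  have h := Real.log_lt_sub_one_of_pos (div_pos hr hq) hne'
  have hlog : Real.log (q / r) = - Real.log (r / q) := by
    rw [← Real.log_inv, inv_div]
  rw [hlog]
  have h2 := mul_lt_mul_of_pos_left h hq
  have h3 : q * (r / q) = r := by field_simp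
  nlinarith

lemma iterm_le {q r : ℝ} (hq : 0 < q) (hr : 0 < r) : r * Real.log (q / r) ≤ q - r := by
  have h := Real.log_le_sub_one_of_pos (div_pos hq hr)
  have h2 := mul_le_mul_of_nonneg_left h hr.le
  have h3 : r * (q / r) = q := by field_simp
  nlinarith

lemma iterm_lt {q r : ℝ} (hq : 0 < q) (hr : 0 < r) (hne : q ≠ r) :
    r * Real.log (q / r) < q - r := by
  have hne' : q / r ≠ 1 := by
    intro h; apply hne; field_simp at h; linarith
  have h := Real.log_lt_sub_one_of_pos (div_pos hq hr) hne'
  have h2 := mul_lt_mul_of_pos_left h hr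
  have h3 : r * (q / r) = q := by field_simp
  nlinarith

section core
variable {cr p : ℝ}

lemma guilty_pos' (hcr : 2 ≤ cr) (hp0 : 0 < p) (hp1 : p < 1) :
    0 < (p/cr + (cr-1)/cr * (p*p)) * Real.log (1 + (1-p)/(cr*p))
      + ((cr-1)/cr * (p*(1-p))) * Real.log (1 - 1/cr)
      + ((cr-1)/cr * ((1-p)*p)) * Real.log (1 - 1/cr)
      + ((1-p)/cr + (cr-1)/cr * ((1-p)*(1-p))) * Real.log (1 + p/(cr*(1-p))) := by
  have hc0 : (0:ℝ) < cr := by linarith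
  have h1p : 0 < 1 - p := by linarith
  have hfrac : 0 < (cr-1)/cr := div_pos (by linarith) hc0
  have hpp : 0 < p*(1-p) := by positivity
  have hq11p : 0 < p/cr + (cr-1)/cr * (p*p) := by
    have h1 : 0 < p/cr := by positivity
    nlinarith
  have hq10p : 0 < (cr-1)/cr * (p*(1-p)) := mul_pos hfrac hpp
  have hq00p : 0 < (1-p)/cr + (cr-1)/cr * ((1-p)*(1-p)) := by
    have h1 : 0 < (1-p)/cr := by positivity
    nlinarith
  have h11 : 1 + (1-p)/(cr*p) = (p/cr + (cr-1)/cr * (p*p)) / (p*p) := by field_simp; ring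
  have h10 : 1 - 1/cr = ((cr-1)/cr * (p*(1-p))) / (p*(1-p)) := by field_simp
  have h00 : 1 + p/(cr*(1-p)) = ((1-p)/cr + (cr-1)/cr * ((1-p)*(1-p))) / ((1-p)*(1-p)) := by
    field_simp; ring
  have hne : (cr-1)/cr * (p*(1-p)) ≠ p*(1-p) := by
    have hlt : (cr-1)/cr < 1 := by rw [div_lt_one hc0]; linarith
    have := mul_lt_of_lt_one_left hpp hlt
    exact this.ne
  have b11 := term_ge hq11p (by positivity : (0:ℝ) < p*p)
  have b10 := term_gt hq10p hpp hne
  have b00 := term_ge hq00p (by positivity : (0:ℝ) < (1-p)*(1-p))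
  have hsum : (p/cr + (cr-1)/cr * (p*p) - p*p) + 2*((cr-1)/cr * (p*(1-p)) - p*(1-p))
      + ((1-p)/cr + (cr-1)/cr * ((1-p)*(1-p)) - (1-p)*(1-p)) = 0 := by field_simp; ring
  rw [show ((cr-1)/cr * ((1-p)*p)) = (cr-1)/cr * (p*(1-p)) from by ring, h11, h10, h00]
  linarith

lemma innocent_neg' (hcr : 2 ≤ cr) (hp0 : 0 < p) (hp1 : p < 1) :
    (p*p) * Real.log (1 + (1-p)/(cr*p))
      + (p*(1-p)) * Real.log (1 - 1/cr)
      + ((1-p)*p) * Real.log (1 - 1/cr)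
      + ((1-p)*(1-p)) * Real.log (1 + p/(cr*(1-p))) < 0 := by
  have hc0 : (0:ℝ) < cr := by linarith
  have h1p : 0 < 1 - p := by linarith
  have hfrac : 0 < (cr-1)/cr := div_pos (by linarith) hc0
  have hpp : 0 < p*(1-p) := by positivity
  have hq11p : 0 < p/cr + (cr-1)/cr * (p*p) := by
    have h1 : 0 < p/cr := by positivity
    nlinarith
  have hq10p : 0 < (cr-1)/cr * (p*(1-p)) := mul_pos hfrac hpp
  have hq00p : 0 < (1-p)/cr + (cr-1)/cr * ((1-p)*(1-p)) := by
    have h1 : 0 < (1-p)/cr := by positivity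
    nlinarith
  have h11 : 1 + (1-p)/(cr*p) = (p/cr + (cr-1)/cr * (p*p)) / (p*p) := by field_simp; ring
  have h10 : 1 - 1/cr = ((cr-1)/cr * (p*(1-p))) / (p*(1-p)) := by field_simp
  have h00 : 1 + p/(cr*(1-p)) = ((1-p)/cr + (cr-1)/cr * ((1-p)*(1-p))) / ((1-p)*(1-p)) := by
    field_simp; ring
  have hne : (cr-1)/cr * (p*(1-p)) ≠ p*(1-p) := by
    have hlt : (cr-1)/cr < 1 := by rw [div_lt_one hc0]; linarith
    exact (mul_lt_of_lt_one_left hpp hlt).ne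
  have b11 := iterm_le hq11p (by positivity : (0:ℝ) < p*p)
  have b10 := iterm_lt hq10p hpp hne
  have b00 := iterm_le hq00p (by positivity : (0:ℝ) < (1-p)*(1-p))
  have hsum : (p/cr + (cr-1)/cr * (p*p) - p*p) + 2*((cr-1)/cr * (p*(1-p)) - p*(1-p))
      + ((1-p)/cr + (cr-1)/cr * ((1-p)*(1-p)) - (1-p)*(1-p)) = 0 := by field_simp; ring
  rw [show ((1-p)*p : ℝ) = p*(1-p) from by ring, h11, h10, h00]
  linarith

end core

noncomputable def intScore (c : ℕ) (x y : Bool) (p : ℝ) : ℝ :=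
  match x, y with
  | false, false => Real.log (1 + p / ((c : ℝ) * (1 - p)))
  | true, true => Real.log (1 + (1 - p) / ((c : ℝ) * p))
  | _, _ => Real.log (1 - 1 / (c : ℝ))

/-- **Positive guilty drift and negative innocent drift for the interleaving decoder.**
Let `X 0, …, X (c−1)` be i.i.d. Bernoulli(`p`), let `J` be uniform on `Fin c` and
independent of the vector `(X i)ᵢ`, and set `Y = X J` (the interleaving attack).  Then
the expected per-segment score of the colluder `X 0`, namely
`∑_{x,y} P(X₁ = x, Y = y)·g(x,y,p)`, is strictly positive, and the expected per-segment
score of an innocent user, namely `∑_{x,y} P(X₁ = x)·P(Y = y)·g(x,y,p)`, is strictly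
negative. -/
theorem interleaving_drifts
    {Ω : Type*} [MeasurableSpace Ω] (P : Measure Ω) [IsProbabilityMeasure P]
    (c : ℕ) (hc : 2 ≤ c) (p : ℝ) (hp : p ∈ Set.Ioo (0 : ℝ) 1)
    (X : Fin c → Ω → Bool) (J : Ω → Fin c)
    (hXmeas : ∀ i, Measurable (X i)) (hJmeas : Measurable J)
    (hXbern : ∀ i, P {ω | X i ω = true} = ENNReal.ofReal p)
    (hXindep : iIndepFun X P)
    (hJunif : ∀ j : Fin c, P {ω | J ω = j} = (c : ℝ≥0∞)⁻¹)
    (hXJindep : IndepFun (fun ω i => X i ω) J P) :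
    (0 < ∑ x : Bool, ∑ y : Bool,
        (P {ω | X ⟨0, by omega⟩ ω = x ∧ X (J ω) ω = y}).toReal * intScore c x y p) ∧
    (∑ x : Bool, ∑ y : Bool,
        (P {ω | X ⟨0, by omega⟩ ω = x}).toReal * (P {ω | X (J ω) ω = y}).toReal *
          intScore c x y p) < 0 := by
  obtain ⟨hp0, hp1⟩ := hp
  have hcR : (2:ℝ) ≤ (c:ℝ) := by exact_mod_cast hc
  have hcpos : 0 < c := by omega
  have h1p : 0 < 1 - p := by linarith
  have hcne : ((c:ℝ≥0∞)) ≠ 0 := Nat.cast_ne_zero.mpr hcpos.ne'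
  set i0 : Fin c := ⟨0, by omega⟩ with hi0
  set m : Bool → ℝ := fun x => if x then p else 1 - p with hm
  have hmnn : ∀ x, 0 ≤ m x := by intro x; cases x <;> simp [hm] <;> linarith
  set V : Ω → (Fin c → Bool) := fun ω i => X i ω with hV
  have hVmeas : Measurable V := measurable_pi_lambda _ hXmeas
  have hXx : ∀ (i : Fin c) (x : Bool), P {ω | X i ω = x} = ENNReal.ofReal (m x) := by
    intro i x
    cases x
    · have hset : {ω | X i ω = false} = {ω | X i ω = true}ᶜ := by ext ω; simp
      have hms : MeasurableSet {ω | X i ω = true} := hXmeas i (measurableSet_singleton true)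
      rw [hset, measure_compl hms (measure_ne_top _ _),
        hXbern i, measure_univ, ← ENNReal.ofReal_one, ← ENNReal.ofReal_sub _ hp0.le]
      simp [hm]
    · rw [hXbern i]; simp [hm]
  have hsplit : ∀ (S : Fin c → Set (Fin c → Bool)),
      P {ω | V ω ∈ S (J ω)} = ∑ j : Fin c, (c:ℝ≥0∞)⁻¹ * P (V ⁻¹' (S j)) := by
    intro S
    have hset : {ω | V ω ∈ S (J ω)} = ⋃ j : Fin c, ((J ⁻¹' {j}) ∩ (V ⁻¹' (S j))) := by
      ext ω
      simp only [Set.mem_iUnion, Set.mem_inter_iff, Set.mem_preimage, Set.mem_singleton_iff,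
        Set.mem_setOf_eq]
      constructor
      · intro h; exact ⟨J ω, rfl, h⟩
      · rintro ⟨j, rfl, h⟩; exact h
    rw [hset, measure_iUnion ?_ (fun j => ((hJmeas (measurableSet_singleton j)).inter
        (hVmeas (Set.to_countable _).measurableSet))), tsum_fintype]
    · refine Finset.sum_congr rfl fun j _ => ?_
      rw [Set.inter_comm, hXJindep.measure_inter_preimage_eq_mul _ _
        ((Set.to_countable _).measurableSet) (measurableSet_singleton j)]
      rw [show P (J ⁻¹' {j}) = (c:ℝ≥0∞)⁻¹ from hJunif j, mul_comm]
    · intro a b hab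
      refine Set.disjoint_left.2 ?_
      rintro ω ⟨ha, _⟩ ⟨hb, _⟩
      exact hab (ha.symm.trans hb)
  have hYy : ∀ y : Bool, P {ω | X (J ω) ω = y} = ENNReal.ofReal (m y) := by
    intro y
    have e1 : P {ω | X (J ω) ω = y}
        = ∑ j : Fin c, (c:ℝ≥0∞)⁻¹ * P (V ⁻¹' {v : Fin c → Bool | v j = y}) :=
      hsplit (fun j => {v : Fin c → Bool | v j = y})
    rw [e1]
    have e2 : ∀ j : Fin c, P (V ⁻¹' {v : Fin c → Bool | v j = y}) = ENNReal.ofReal (m y) :=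
      fun j => hXx j y
    simp only [e2]
    rw [Finset.sum_const, Finset.card_univ, Fintype.card_fin, nsmul_eq_mul, ← mul_assoc,
      ENNReal.mul_inv_cancel hcne (ENNReal.natCast_ne_top c), one_mul]
  have hjoint : ∀ x y : Bool, P {ω | X i0 ω = x ∧ X (J ω) ω = y}
      = (c:ℝ≥0∞)⁻¹ * (if x = y then ENNReal.ofReal (m x) else 0)
        + ((c-1 : ℕ) : ℝ≥0∞) * ((c:ℝ≥0∞)⁻¹ * (ENNReal.ofReal (m x) * ENNReal.ofReal (m y))) := by
    intro x y
    have e1 : P {ω | X i0 ω = x ∧ X (J ω) ω = y}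
        = ∑ j : Fin c, (c:ℝ≥0∞)⁻¹ * P (V ⁻¹' {v : Fin c → Bool | v i0 = x ∧ v j = y}) :=
      hsplit (fun j => {v : Fin c → Bool | v i0 = x ∧ v j = y})
    rw [e1]
    rw [← Finset.add_sum_erase _ _ (Finset.mem_univ i0)]
    have hdiag : P (V ⁻¹' {v : Fin c → Bool | v i0 = x ∧ v i0 = y})
        = if x = y then ENNReal.ofReal (m x) else 0 := by
      by_cases hxy : x = y
      · subst hxy
        have e3 : V ⁻¹' {v : Fin c → Bool | v i0 = x ∧ v i0 = x} = {ω | X i0 ω = x} := by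
          ext ω; simp [hV]
        rw [e3, hXx, if_pos rfl]
      · have e3 : V ⁻¹' {v : Fin c → Bool | v i0 = x ∧ v i0 = y} = ∅ := by
          ext ω
          simp only [Set.mem_preimage, Set.mem_setOf_eq, Set.mem_empty_iff_false, iff_false,
            not_and]
          intro h1 h2
          exact hxy ((h1.symm.trans h2))
        rw [e3, if_neg hxy]; simp
    have hoff : ∀ j ∈ Finset.univ.erase i0,
        (c:ℝ≥0∞)⁻¹ * P (V ⁻¹' {v : Fin c → Bool | v i0 = x ∧ v j = y})
          = (c:ℝ≥0∞)⁻¹ * (ENNReal.ofReal (m x) * ENNReal.ofReal (m y)) := by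
      intro j hj
      have hne : j ≠ i0 := Finset.ne_of_mem_erase hj
      have hind : IndepFun (X i0) (X j) P := hXindep.indepFun (Ne.symm hne)
      have e4 : P (V ⁻¹' {v : Fin c → Bool | v i0 = x ∧ v j = y})
          = P (X i0 ⁻¹' {x}) * P (X j ⁻¹' {y}) := by
        have e : V ⁻¹' {v : Fin c → Bool | v i0 = x ∧ v j = y}
            = (X i0 ⁻¹' {x}) ∩ (X j ⁻¹' {y}) := rfl
        rw [e, hind.measure_inter_preimage_eq_mul _ _ (measurableSet_singleton x)
          (measurableSet_singleton y)]
      rw [e4, show P (X i0 ⁻¹' {x}) = ENNReal.ofReal (m x) from hXx i0 x,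
        show P (X j ⁻¹' {y}) = ENNReal.ofReal (m y) from hXx j y]
    rw [Finset.sum_congr rfl hoff, Finset.sum_const, Finset.card_erase_of_mem (Finset.mem_univ i0),
      Finset.card_univ, Fintype.card_fin, hdiag, nsmul_eq_mul]
  -- toReal versions
  have hjointR : ∀ x y : Bool, (P {ω | X i0 ω = x ∧ X (J ω) ω = y}).toReal
      = (if x = y then m x / (c:ℝ) else 0) + ((c:ℝ)-1)/(c:ℝ) * (m x * m y) := by
    intro x y
    have hcast : ((c - 1 : ℕ) : ℝ) = (c:ℝ) - 1 := by
      push_cast [Nat.cast_sub hcpos]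
      ring
    have hA : ((c:ℝ≥0∞)⁻¹ * (if x = y then ENNReal.ofReal (m x) else 0)).toReal
        = (c:ℝ)⁻¹ * (if x = y then m x else 0) := by
      rw [ENNReal.toReal_mul, ENNReal.toReal_inv, ENNReal.toReal_natCast, apply_ite ENNReal.toReal,
        ENNReal.toReal_ofReal (hmnn x), ENNReal.toReal_zero]
    have hB : (((c-1 : ℕ) : ℝ≥0∞) * ((c:ℝ≥0∞)⁻¹
          * (ENNReal.ofReal (m x) * ENNReal.ofReal (m y)))).toReal
        = ((c:ℝ)-1) * ((c:ℝ)⁻¹ * (m x * m y)) := by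
      rw [ENNReal.toReal_mul, ENNReal.toReal_mul, ENNReal.toReal_mul, ENNReal.toReal_inv,
        ENNReal.toReal_natCast, ENNReal.toReal_natCast, ENNReal.toReal_ofReal (hmnn x),
        ENNReal.toReal_ofReal (hmnn y), hcast]
    have hfin1 : ((c:ℝ≥0∞)⁻¹ * (if x = y then ENNReal.ofReal (m x) else 0)) ≠ ⊤ := by
      refine ENNReal.mul_ne_top (by simp [hcpos.ne']) ?_
      by_cases hxy : x = y <;> simp [hxy]
    have hfin2 : (((c-1 : ℕ) : ℝ≥0∞) * ((c:ℝ≥0∞)⁻¹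
        * (ENNReal.ofReal (m x) * ENNReal.ofReal (m y)))) ≠ ⊤ :=
      ENNReal.mul_ne_top (ENNReal.natCast_ne_top _)
        (ENNReal.mul_ne_top (by simp [hcpos.ne'])
          (ENNReal.mul_ne_top ENNReal.ofReal_ne_top ENNReal.ofReal_ne_top))
    rw [hjoint x y, ENNReal.toReal_add hfin1 hfin2, hA, hB]
    by_cases hxy : x = y <;> simp only [hxy, if_pos, if_neg, not_false_iff, if_true] <;> ring
  have hYR : ∀ y : Bool, (P {ω | X (J ω) ω = y}).toReal = m y := by
    intro y; rw [hYy y, ENNReal.toReal_ofReal (hmnn y)]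
  have hXR : ∀ x : Bool, (P {ω | X i0 ω = x}).toReal = m x := by
    intro x; rw [hXx i0 x, ENNReal.toReal_ofReal (hmnn x)]
  constructor
  · have hG := guilty_pos' hcR hp0 hp1
    refine lt_of_lt_of_eq hG ?_
    simp only [Fintype.sum_bool, hjointR, intScore, hm]
    norm_num
    ring
  · have hI := innocent_neg' hcR hp0 hp1
    refine lt_of_eq_of_lt ?_ hI
    simp only [Fintype.sum_bool, hjointR, hYR, hXR, intScore, hm]
    norm_num
    ring
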